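/- Let T be an infinite tree such that for every non-degenerate labeling l : V(T) → [0,∞), the ultrametric space (V(T), d_l) is totally bounded if and only if there is an infinite totally bounded subset A ⊆ V(T). Then for every non-degenerate labeling l : V(T) → [0,∞), the ultrametric space (V(T), d_l) is not compact. -/

import Mathlib

open SimpleGraph

/-- `d` is an ultrametric on `V`: a metric satisfying the strong triangle inequality. -/
def IsUltrametricOn {V : Type*} (d : V → V → ℝ) : Prop :=
  (∀ x y, 0 ≤ d x y) ∧ (∀ x y, d x y = d y x) ∧
    (∀ x y, d x y = 0 ↔ x = y) ∧
    ∀ x y z, d x y ≤ max (d x z) (d z y)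

/-- The vertex labeling `l` of the graph `G` is non-degenerate:
`max {l u, l v} > 0` for every edge `{u, v}`. -/
def NondegenerateLabeling {V : Type*} (G : SimpleGraph V) (l : V → ℝ) : Prop :=
  ∀ u v, G.Adj u v → 0 < max (l u) (l v)

/-- `d` is the function `d_l` generated by the vertex labeling `l` on the tree `G`:
`d u u = 0`, and for `u ≠ v`, `d u v` is the maximum of the labels of the vertices of
the (unique) path joining `u` and `v`. -/
def IsLabelDist {V : Type*} (G : SimpleGraph V) (l : V → ℝ) (d : V → V → ℝ) : Prop :=
  (∀ u, d u u = 0) ∧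
    ∀ u v : V, u ≠ v → ∀ p : G.Walk u v, p.IsPath →
      IsGreatest (l '' {w | w ∈ p.support}) (d u v)

/-- `x` is a Cauchy sequence with respect to the distance function `d`. -/
def CauchyWith {V : Type*} (d : V → V → ℝ) (x : ℕ → V) : Prop :=
  ∀ ε : ℝ, 0 < ε → ∃ N : ℕ, ∀ m ≥ N, ∀ n ≥ N, d (x m) (x n) < ε

/-- The set `A` is totally bounded with respect to the distance function `d`:
for every `r > 0` it is covered by finitely many open balls of radius `r` centered in `A`. -/
def TotallyBoundedWith {V : Type*} (d : V → V → ℝ) (A : Set V) : Prop :=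
  ∀ r : ℝ, 0 < r → ∃ s : Finset V, ↑s ⊆ A ∧ ∀ x ∈ A, ∃ c ∈ s, d c x < r

/-- The space `V` with distance `d` is compact: every cover of `V` by open balls
(given by center–radius pairs) contains a finite subcover. -/
def CompactWith {V : Type*} (d : V → V → ℝ) : Prop :=
  ∀ F : Set (V × ℝ), (∀ x : V, ∃ p ∈ F, d p.1 x < p.2) →
    ∃ s : Finset (V × ℝ), ↑s ⊆ F ∧ ∀ x : V, ∃ p ∈ s, d p.1 x < p.2

/-- The subgraph `R` of `G` is a ray: its vertices can be enumerated as a sequence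
`f 0, f 1, …` of pairwise distinct vertices, with edges exactly `{f n, f (n+1)}`. -/
def IsRaySubgraph {V : Type*} {G : SimpleGraph V} (R : G.Subgraph) : Prop :=
  ∃ f : ℕ → V, Function.Injective f ∧ R.verts = Set.range f ∧
    ∀ x y, R.Adj x y ↔ ∃ n, (x = f n ∧ y = f (n + 1)) ∨ (x = f (n + 1) ∧ y = f n)

/-- The subgraph `T₀` of `G` is a finite subtree. -/
def IsFiniteSubtree {V : Type*} {G : SimpleGraph V} (T₀ : G.Subgraph) : Prop :=
  T₀.verts.Finite ∧ T₀.coe.IsTree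

/-- The subgraph `H` of `G` is almost a ray: `H` is the union of a ray and a finite subtree. -/
def IsAlmostRaySubgraph {V : Type*} {G : SimpleGraph V} (H : G.Subgraph) : Prop :=
  ∃ R T₀ : G.Subgraph, IsRaySubgraph R ∧ IsFiniteSubtree T₀ ∧ T₀ ⊔ R = H

/-- The graph `G` is almost a ray: `G` is the union of a ray and a finite subtree. -/
def IsAlmostRayGraph {V : Type*} (G : SimpleGraph V) : Prop :=
  ∃ R T₀ : G.Subgraph, IsRaySubgraph R ∧ IsFiniteSubtree T₀ ∧ T₀ ⊔ R = ⊤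

/-- `H` is the convex hull of the vertex set `A` in `G`: a subtree containing `A`
which is a subgraph of every subtree of `G` containing `A`. -/
def IsConvexHullSubtree {V : Type*} (G : SimpleGraph V) (A : Set V) (H : G.Subgraph) : Prop :=
  H.coe.IsTree ∧ A ⊆ H.verts ∧
    ∀ H' : G.Subgraph, H'.coe.IsTree → A ⊆ H'.verts → H ≤ H'



section Aux

open SimpleGraph

/-- Every walk from `u` to `v ≠ u` starts with an edge; the second vertex is
adjacent to `u` and lies on the support. -/
lemma walk_second_vertex {V : Type*} {G : SimpleGraph V} {u v : V} (w : G.Walk u v)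
    (h : u ≠ v) : ∃ x, G.Adj u x ∧ x ∈ w.support := by
  cases w with
  | nil => exact absurd rfl h
  | cons h' w' =>
    exact ⟨_, h', by simp [SimpleGraph.Walk.support_cons,
      SimpleGraph.Walk.start_mem_support]⟩

/-- For every labeling of a tree there is a label-distance function. -/
lemma exists_labelDist_aux {V : Type*} (G : SimpleGraph V) (hG : G.IsTree) (l : V → ℝ) :
    ∃ d : V → V → ℝ, IsLabelDist G l d := by
  classical
  choose P hP hPuniq using hG.existsUnique_path
  refine ⟨fun u v => if h : u = v then 0 else sSup (l '' {w | w ∈ (P u v).support}), ?_, ?_⟩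
  · intro u; simp
  · intro u v huv p hp
    have hps : p = P u v := hPuniq u v p hp
    rw [hps]
    have hfin : (l '' {w | w ∈ (P u v).support}).Finite :=
      ((P u v).support.finite_toSet).image l
    have hne : (l '' {w | w ∈ (P u v).support}).Nonempty :=
      ⟨l u, u, (P u v).start_mem_support, rfl⟩
    simp only [dif_neg huv]
    exact ⟨hne.csSup_mem hfin, fun x hx => le_csSup hfin.bddAbove hx⟩

end Aux

/-- If an infinite tree `T` is such that for every non-degenerate labeling
`l` the space `(V(T), d_l)` is totally bounded iff it contains an infinite totally
bounded subset, then `(V(T), d_l)` is not compact for every non-degenerate labeling. -/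
theorem stmt11 {V : Type*} [Infinite V] (G : SimpleGraph V) (hG : G.IsTree)
    (hyp : ∀ l : V → ℝ, (∀ w, 0 ≤ l w) → NondegenerateLabeling G l →
      ∀ d : V → V → ℝ, IsLabelDist G l d →
        (TotallyBoundedWith d Set.univ ↔
          ∃ A : Set V, A.Infinite ∧ TotallyBoundedWith d A)) :
    ∀ l : V → ℝ, (∀ w, 0 ≤ l w) → NondegenerateLabeling G l →
      ∀ d : V → V → ℝ, IsLabelDist G l d → ¬ CompactWith d := by
  intro l hl0 hnd d hd hcomp
  classical
  -- Step 1: there is an accumulation point `p`.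
  have hacc : ∃ p : V, ∀ r : ℝ, 0 < r → {y | d p y < r}.Infinite := by
    by_contra hno
    push_neg at hno
    have hcov : ∀ x : V, ∃ pr ∈ {pr : V × ℝ | {y | d pr.1 y < pr.2}.Finite}, d pr.1 x < pr.2 := by
      intro x
      obtain ⟨r, hr, hfin⟩ := hno x
      exact ⟨(x, r), hfin, by simpa [hd.1 x] using hr⟩
    obtain ⟨s, hsF, hscov⟩ := hcomp _ hcov
    have huniv : (Set.univ : Set V).Finite := by
      have hsub : (Set.univ : Set V) ⊆ ⋃ pr ∈ (s : Set (V × ℝ)), {y | d pr.1 y < pr.2} := by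
        intro x _
        obtain ⟨pr, hpr, hlt⟩ := hscov x
        exact Set.mem_biUnion hpr hlt
      exact ((s.finite_toSet.biUnion (fun pr hpr => hsF hpr))).subset hsub
    exact Set.infinite_univ huniv
  obtain ⟨p, hp⟩ := hacc
  -- Step 2: for each n, find a neighbor of p with small label.
  have key : ∀ n : ℕ, ∃ qn : V, G.Adj p qn ∧ l qn < 1 / (n + 1 : ℝ) ∧ l p < 1 / (n + 1 : ℝ) := by
    intro n
    have hpos : (0 : ℝ) < 1 / (n + 1 : ℝ) := by positivity
    obtain ⟨x, hx⟩ := ((hp _ hpos).diff (Set.finite_singleton p)).nonempty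
    have hdx : d p x < 1 / (n + 1 : ℝ) := hx.1
    have hxp : x ≠ p := by simpa using hx.2
    obtain ⟨w⟩ := hG.isConnected.preconnected p x
    have hIG := hd.2 p x (Ne.symm hxp) w.toPath.1 w.toPath.2
    obtain ⟨qn, hadj, hmem⟩ := walk_second_vertex (w.toPath.1) (Ne.symm hxp)
    have hlq : l qn ≤ d p x := hIG.2 ⟨qn, hmem, rfl⟩
    have hlp : l p ≤ d p x := hIG.2 ⟨p, (w.toPath.1).start_mem_support, rfl⟩
    exact ⟨qn, hadj, lt_of_le_of_lt hlq hdx, lt_of_le_of_lt hlp hdx⟩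
  choose q hqadj hqlt hplt using key
  have hlp0 : l p = 0 := by
    by_contra hne
    have hpos : 0 < l p := (hl0 p).lt_of_ne (Ne.symm hne)
    obtain ⟨n, hn⟩ := exists_nat_one_div_lt hpos
    exact absurd (hplt n) (not_lt.2 hn.le)
  have hqpos : ∀ n, 0 < l (q n) := by
    intro n
    have h := hnd p (q n) (hqadj n)
    rwa [hlp0, max_eq_right (hl0 (q n))] at h
  -- Step 3: each fiber of q is finite.
  have hfib : ∀ v : V, {n : ℕ | q n = v}.Finite := by
    intro v
    rcases Set.eq_empty_or_nonempty {n : ℕ | q n = v} with he | ⟨n₀, hn₀⟩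
    · simp [he]
    · have hv : 0 < l v := by rw [← hn₀]; exact hqpos n₀
      apply (Set.finite_Iio (⌈1 / l v⌉₊)).subset
      intro n hn
      have h1 : l v < 1 / ((n : ℝ) + 1) := by rw [← hn]; exact hqlt n
      have hn1 : (0 : ℝ) < (n : ℝ) + 1 := by positivity
      have h2 : ((n : ℝ) + 1) * l v < 1 := by
        have h3 := mul_lt_mul_of_pos_left h1 hn1
        rwa [mul_one_div, div_self hn1.ne'] at h3
      have h3 : (n : ℝ) + 1 < 1 / l v := (lt_div_iff₀ hv).2 h2
      have h4 : (n : ℝ) < 1 / l v := by linarith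
      exact Set.mem_Iio.2 (Nat.lt_ceil.2 h4)
  -- Step 4: extract an injective sequence of neighbors with small labels.
  have hstep : ∀ M : ℕ, ∃ m : ℕ, M < m ∧ q m ∉ q '' Set.Iic M := by
    intro M
    have hfin : {m : ℕ | q m ∈ q '' Set.Iic M}.Finite := by
      have himg : (q '' Set.Iic M).Finite := (Set.finite_Iic M).image q
      have heq : {m : ℕ | q m ∈ q '' Set.Iic M} = ⋃ v ∈ q '' Set.Iic M, {m : ℕ | q m = v} := by
        ext m
        simp [eq_comm]
      rw [heq]
      exact himg.biUnion (fun v _ => hfib v)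
    obtain ⟨m, hm⟩ := (hfin.union (Set.finite_Iic M)).infinite_compl.nonempty
    simp only [Set.mem_compl_iff, Set.mem_union, not_or, Set.mem_Iic, not_le,
      Set.mem_setOf_eq] at hm
    exact ⟨m, hm.2, hm.1⟩
  choose step hstep1 hstep2 using hstep
  set Nf : ℕ → ℕ := fun k => Nat.rec 0 (fun _ Mk => step Mk) k with hNf
  have hNsucc : ∀ k, Nf (k + 1) = step (Nf k) := fun k => rfl
  have hNmono : StrictMono Nf := strictMono_nat_of_lt_succ (fun k => hstep1 (Nf k))
  have hNk : ∀ k, k ≤ Nf k := fun k => hNmono.le_apply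
  set g : ℕ → V := fun k => q (Nf k) with hg
  have ginj : Function.Injective g := by
    have hne : ∀ j k, j < k → g j ≠ g k := by
      intro j k hjk heq
      obtain ⟨k', rfl⟩ : ∃ k', k = k' + 1 := ⟨k - 1, by omega⟩
      have heq' : q (Nf j) = q (step (Nf k')) := by rw [← hNsucc k']; exact heq
      exact hstep2 (Nf k') ⟨Nf j, Set.mem_Iic.2 (hNmono.monotone (by omega)), heq'⟩
    intro j k h
    rcases lt_trichotomy j k with h' | h' | h'
    · exact absurd h (hne _ _ h')
    · exact h'
    · exact absurd h.symm (hne _ _ h')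
  have hglt : ∀ k, l (g k) < 1 / ((k : ℝ) + 1) := by
    intro k
    refine lt_of_lt_of_le (hqlt (Nf k)) ?_
    apply one_div_le_one_div_of_le (by positivity)
    have hcast : (k : ℝ) ≤ (Nf k : ℝ) := Nat.cast_le.2 (hNk k)
    linarith
  have hgadj : ∀ k, G.Adj p (g k) := fun k => hqadj (Nf k)
  -- Step 5: the bad labeling.
  set a : ℕ → V := fun k => g (2 * k) with ha
  set b : ℕ → V := fun k => g (2 * k + 1) with hb
  have hainj : Function.Injective a := by
    intro j k h
    have h' : g (2 * j) = g (2 * k) := h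
    have := @ginj (2 * j) (2 * k) h'
    omega
  have hbinj : Function.Injective b := by
    intro j k h
    have h' : g (2 * j + 1) = g (2 * k + 1) := h
    have := @ginj (2 * j + 1) (2 * k + 1) h'
    omega
  set B : Set V := Set.range b with hB
  set l' : V → ℝ := fun v => if v ∈ B then l v + 1 else l v with hl'
  have hl'ge : ∀ w, l w ≤ l' w := by
    intro w
    simp only [hl']
    split
    · linarith
    · exact le_refl _
  have hl'0 : ∀ w, 0 ≤ l' w := fun w => le_trans (hl0 w) (hl'ge w)
  have hnd' : NondegenerateLabeling G l' := fun u v h =>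
    lt_of_lt_of_le (hnd u v h) (max_le_max (hl'ge u) (hl'ge v))
  have haB : ∀ k, a k ∉ B := by
    rintro k ⟨j, hj⟩
    have hj' : g (2 * j + 1) = g (2 * k) := hj
    have := @ginj (2 * j + 1) (2 * k) hj'
    omega
  have hpB : p ∉ B := by
    rintro ⟨j, hj⟩
    exact (hgadj (2 * j + 1)).ne hj.symm
  have hl'p : l' p = 0 := by simp only [hl', if_neg hpB, hlp0]
  have hl'a : ∀ k, l' (a k) = l (a k) := fun k => by simp only [hl', if_neg (haB k)]
  have hl'b : ∀ k, l' (b k) = l (b k) + 1 := fun k => by simp only [hl', if_pos (show b k ∈ B from ⟨k, rfl⟩)]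
  obtain ⟨d', hd'⟩ := exists_labelDist_aux G hG l'
  have hd'00 : ∀ x, d' x x = 0 := hd'.1
  -- distance from p to a k
  have hd'pa : ∀ k, d' p (a k) = 0 ∨ d' p (a k) = l (a k) := by
    intro k
    have hne : p ≠ a k := (hgadj (2 * k)).ne
    have hIG := hd'.2 p (a k) hne (SimpleGraph.Path.singleton (hgadj (2 * k))).1
      (SimpleGraph.Path.singleton (hgadj (2 * k))).2
    have hsupp : {w | w ∈ ((SimpleGraph.Path.singleton (hgadj (2 * k))) :
        G.Walk p (a k)).support} = {p, a k} := by
      ext w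
      simp [SimpleGraph.Path.singleton, ha]
    rw [hsupp, Set.image_pair] at hIG
    rcases hIG.1 with h | h
    · left; rw [h, hl'p]
    · right; rw [h, hl'a]
  set A : Set V := insert p (Set.range a) with hA
  have hAinf : A.Infinite :=
    (Set.infinite_range_of_injective hainj).mono (Set.subset_insert _ _)
  have hATB : TotallyBoundedWith d' A := by
    intro r hr
    obtain ⟨K, hK⟩ := exists_nat_one_div_lt hr
    refine ⟨insert p ((Finset.range (K + 1)).image a), ?_, ?_⟩
    · intro x hx
      simp only [Finset.coe_insert, Finset.coe_image, Finset.coe_range, Set.mem_insert_iff,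
        Set.mem_image, Set.mem_Iio] at hx
      rcases hx with rfl | ⟨k, _, rfl⟩
      · exact Set.mem_insert _ _
      · exact Set.mem_insert_of_mem _ ⟨k, rfl⟩
    · intro x hx
      rcases Set.mem_insert_iff.1 hx with hxp | ⟨k, rfl⟩
      · exact ⟨p, Finset.mem_insert_self _ _, by rw [hxp, hd'00]; exact hr⟩
      · by_cases hk : k ≤ K
        · refine ⟨a k, ?_, by rw [hd'00]; exact hr⟩
          exact Finset.mem_insert_of_mem (Finset.mem_image.2 ⟨k, Finset.mem_range.2 (by omega), rfl⟩)
        · refine ⟨p, Finset.mem_insert_self _ _, ?_⟩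
          rcases hd'pa k with h | h
          · rw [h]; exact hr
          · rw [h]
            have h1 : l (a k) < 1 / (((2 * k : ℕ) : ℝ) + 1) := hglt (2 * k)
            have h2 : 1 / (((2 * k : ℕ) : ℝ) + 1) ≤ 1 / ((K : ℝ) + 1) := by
              apply one_div_le_one_div_of_le (by positivity)
              have hk' : K ≤ 2 * k := by omega
              have hcast : ((K : ℕ) : ℝ) ≤ ((2 * k : ℕ) : ℝ) := Nat.cast_le.2 hk'
              linarith
            calc l (a k) < 1 / (((2 * k : ℕ) : ℝ) + 1) := h1
              _ ≤ 1 / ((K : ℝ) + 1) := h2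
              _ < r := hK
  have hTBuniv : TotallyBoundedWith d' Set.univ :=
    (hyp l' hl'0 hnd' d' hd').2 ⟨A, hAinf, hATB⟩
  obtain ⟨s, -, hscov⟩ := hTBuniv (1 / 2) (by norm_num)
  have hbs : ∀ k, b k ∈ s := by
    intro k
    obtain ⟨c, hcs, hclt⟩ := hscov (b k) (Set.mem_univ _)
    by_cases hcb : c = b k
    · exact hcb ▸ hcs
    · exfalso
      obtain ⟨w⟩ := hG.isConnected.preconnected c (b k)
      have hIG := hd'.2 c (b k) hcb w.toPath.1 w.toPath.2
      have h1 : l' (b k) ≤ d' c (b k) := hIG.2 ⟨b k, (w.toPath.1).end_mem_support, rfl⟩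
      rw [hl'b k] at h1
      have h2 := hl0 (b k)
      linarith
  have hbinf : (Set.range b).Infinite := Set.infinite_range_of_injective hbinj
  exact hbinf (s.finite_toSet.subset (Set.range_subset_iff.2 (fun k => Finset.mem_coe.2 (hbs k))))
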